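/- For all integers m ≥ 0, n ≥ 1, and 1 ≤ s ≤ n, the alternating sum ∑_{t≥0} (-1)^t C(m, nt+s-1) equals (1/n) ∑_{j=1}^{n} (μ^{2j-1} + 1)^m · μ^{(2j-1)(1-s)}, where μ = exp(πi/n). -/

import Mathlib

open Finset Complex

theorem trigonometric_order_n_binom_sum (m n s : ℕ) (hn : 1 ≤ n) (hs1 : 1 ≤ s) (hsn : s ≤ n) :
    (∑ t ∈ Finset.range (m + 1), ((-1 : ℂ) ^ t * (Nat.choose m (n * t + s - 1) : ℂ))) =
      (1 / n) * ∑ j ∈ Finset.Icc 1 n,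
        (Complex.exp (Real.pi * Complex.I / n) ^ (2 * j - 1) + 1) ^ m *
          Complex.exp (Real.pi * Complex.I / n) ^ ((2 * (j : ℤ) - 1) * (1 - (s : ℤ))) := by
  classical
  have hn0 : (n:ℂ) ≠ 0 := Nat.cast_ne_zero.mpr (by omega)
  have hnZ : (n:ℤ) ≠ 0 := by exact_mod_cast (Nat.pos_of_ne_zero (by omega)).ne'
  set μ : ℂ := Complex.exp (Real.pi * Complex.I / n) with hμ
  have hμ0 : μ ≠ 0 := Complex.exp_ne_zero _
  have hμn : μ ^ n = -1 := by
    rw [hμ, ← Complex.exp_nat_mul,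
      show (n:ℂ) * (Real.pi * Complex.I / n) = Real.pi * Complex.I by field_simp,
      Complex.exp_pi_mul_I]
  have hμn' : μ ^ (n:ℤ) = -1 := by rw [zpow_natCast, hμn]
  have hπ : (Real.pi : ℂ) ≠ 0 := by simpa using Real.pi_ne_zero
  have hdvd : ∀ r : ℤ, μ ^ (2*r) = 1 ↔ (n:ℤ) ∣ r := by
    intro r
    constructor
    · intro h
      rw [hμ, ← Complex.exp_int_mul, Complex.exp_eq_one_iff] at h
      obtain ⟨k, hk⟩ := h
      refine ⟨k, ?_⟩
      field_simp at hk
      have h2 : (r : ℂ) * (Real.pi * Complex.I) = (n * k : ℂ) * (Real.pi * Complex.I) := by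
        push_cast at hk
        linear_combination (Real.pi * Complex.I) * hk / 2
      have h3 : (r : ℂ) = ((n * k : ℤ) : ℂ) := by
        have := mul_right_cancel₀ (mul_ne_zero hπ Complex.I_ne_zero) h2
        push_cast
        exact this
      exact_mod_cast h3
    · rintro ⟨q, rfl⟩
      rw [show 2*((n:ℤ)*q) = (n:ℤ)*(2*q) by ring, zpow_mul, hμn', zpow_mul]
      norm_num
  have hS : ∀ r : ℤ, (∑ j ∈ Icc 1 n, μ ^ ((2*(j:ℤ)-1)*r)) =
      if (n:ℤ) ∣ r then (n:ℂ) * (-1:ℂ)^(r / n) else 0 := by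
    intro r
    by_cases hd : (n:ℤ) ∣ r
    · obtain ⟨q, rfl⟩ := hd
      rw [if_pos ⟨q, rfl⟩, Int.mul_ediv_cancel_left _ hnZ]
      have hterm : ∀ j ∈ Icc 1 n, μ ^ ((2*(j:ℤ)-1)*((n:ℤ)*q)) = (-1:ℂ)^q := by
        intro j hj
        rw [show (2*(j:ℤ)-1)*((n:ℤ)*q) = (n:ℤ)*((2*j-1)*q) by ring, zpow_mul, hμn', zpow_mul]
        congr 1
        rw [show 2*(j:ℤ)-1 = 2*j + (-1) by ring, zpow_add₀ (by norm_num : (-1:ℂ) ≠ 0), zpow_mul]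
        norm_num
      rw [Finset.sum_congr rfl hterm, Finset.sum_const, Nat.card_Icc]
      simp [nsmul_eq_mul]
    · rw [if_neg hd]
      set x : ℂ := μ ^ (2*r) with hx
      have hx1 : x ≠ 1 := fun h => hd ((hdvd r).mp h)
      have hxn : x ^ n = 1 := by
        rw [hx, ← zpow_natCast, ← zpow_mul, show 2*r*(n:ℤ) = 2*(r*n) by ring]
        exact (hdvd _).mpr ⟨r, mul_comm _ _⟩
      have hterm : ∀ j ∈ Icc 1 n, μ ^ ((2*(j:ℤ)-1)*r) = μ ^ (-r) * x ^ j := by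
        intro j hj
        rw [hx, ← zpow_natCast (μ ^ (2*r)), ← zpow_mul, ← zpow_add₀ hμ0]
        congr 1
        ring
      rw [Finset.sum_congr rfl hterm, ← Finset.mul_sum]
      have hgeom : (∑ j ∈ Icc 1 n, x ^ j) = 0 := by
        rw [← Finset.Ico_add_one_right_eq_Icc, geom_sum_Ico hx1 (by omega), pow_succ, hxn]
        simp
      rw [hgeom, mul_zero]
  -- Step A : expand the right-hand side via the binomial theorem and the root filter
  have stepA : (∑ j ∈ Finset.Icc 1 n,
        (μ ^ (2 * j - 1) + 1) ^ m * μ ^ ((2 * (j : ℤ) - 1) * (1 - (s : ℤ))))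
      = ∑ k ∈ Finset.range (m+1), (Nat.choose m k : ℂ) *
          (if (n:ℤ) ∣ ((k:ℤ) + 1 - s) then (n:ℂ) * (-1:ℂ)^(((k:ℤ) + 1 - s) / n) else 0) := by
    have hjterm : ∀ j ∈ Icc 1 n,
        (μ ^ (2 * j - 1) + 1) ^ m * μ ^ ((2 * (j : ℤ) - 1) * (1 - (s : ℤ)))
        = ∑ k ∈ Finset.range (m+1), (Nat.choose m k : ℂ) * μ ^ ((2*(j:ℤ)-1) * ((k:ℤ) + 1 - s)) := by
      intro j hj
      have hj1 : 1 ≤ j := (Finset.mem_Icc.mp hj).1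
      rw [add_pow, Finset.sum_mul]
      refine Finset.sum_congr rfl fun k hk => ?_
      have hcast : ((2 * j - 1 : ℕ) : ℤ) = 2 * (j:ℤ) - 1 := by
        rw [Nat.cast_sub (by omega)]; push_cast; ring
      rw [one_pow, mul_one, ← pow_mul, ← zpow_natCast μ ((2*j-1)*k),
        show μ ^ (((2*j-1)*k : ℕ) : ℤ) * (Nat.choose m k : ℂ) * μ ^ ((2 * (j : ℤ) - 1) * (1 - (s : ℤ)))
          = (Nat.choose m k : ℂ) * (μ ^ (((2*j-1)*k : ℕ) : ℤ) * μ ^ ((2 * (j : ℤ) - 1) * (1 - (s : ℤ)))) by ring,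
        ← zpow_add₀ hμ0]
      congr 1
      rw [Nat.cast_mul, hcast]
      ring
    rw [Finset.sum_congr rfl hjterm, Finset.sum_comm]
    refine Finset.sum_congr rfl fun k hk => ?_
    rw [← Finset.mul_sum, hS]
  rw [stepA]
  -- Step B : the filtered sum equals n times the left-hand side
  have stepB : (∑ k ∈ Finset.range (m+1), (Nat.choose m k : ℂ) *
          (if (n:ℤ) ∣ ((k:ℤ) + 1 - s) then (n:ℂ) * (-1:ℂ)^(((k:ℤ) + 1 - s) / n) else 0))
      = (n:ℂ) * ∑ t ∈ Finset.range (m + 1), ((-1 : ℂ) ^ t * (Nat.choose m (n * t + s - 1) : ℂ)) := by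
    rw [Finset.mul_sum]
    have hA : (∑ k ∈ (Finset.range (m+1)).filter (fun k : ℕ => (n:ℤ) ∣ ((k:ℤ) + 1 - s)),
          (Nat.choose m k : ℂ) *
            (if (n:ℤ) ∣ ((k:ℤ) + 1 - s) then (n:ℂ) * (-1:ℂ)^(((k:ℤ) + 1 - s) / n) else 0))
        = (∑ k ∈ Finset.range (m+1), (Nat.choose m k : ℂ) *
            (if (n:ℤ) ∣ ((k:ℤ) + 1 - s) then (n:ℂ) * (-1:ℂ)^(((k:ℤ) + 1 - s) / n) else 0)) := by
      apply Finset.sum_filter_of_ne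
      intro k hk h
      by_contra hd
      rw [if_neg hd, mul_zero] at h
      exact h rfl
    have hT : (∑ t ∈ (Finset.range (m+1)).filter (fun t => n * t + s - 1 ≤ m),
          (n:ℂ) * ((-1 : ℂ) ^ t * (Nat.choose m (n * t + s - 1) : ℂ)))
        = ∑ t ∈ Finset.range (m + 1), (n:ℂ) * ((-1 : ℂ) ^ t * (Nat.choose m (n * t + s - 1) : ℂ)) := by
      apply Finset.sum_filter_of_ne
      intro t ht h
      by_contra hle
      rw [Nat.choose_eq_zero_of_lt (by omega)] at h
      simp at h
    rw [← hA, ← hT]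
    symm
    have hinv : ∀ k ∈ (Finset.range (m+1)).filter (fun k : ℕ => (n:ℤ) ∣ ((k:ℤ) + 1 - s)),
        ((k:ℤ) + 1 - s).toNat / n ∈ (Finset.range (m+1)).filter (fun t => n * t + s - 1 ≤ m) ∧
        n * (((k:ℤ) + 1 - s).toNat / n) + s - 1 = k := by
      intro k hk
      simp only [Finset.mem_filter, Finset.mem_range] at hk ⊢
      obtain ⟨hkm, hdv⟩ := hk
      obtain ⟨q, hq⟩ := hdv
      have hq0 : 0 ≤ q := by
        have h1 : (n:ℤ)*(-1) < n*q := by rw [← hq]; omega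
        have := (mul_lt_mul_iff_right₀ (show (0:ℤ) < n by omega)).mp h1
        omega
      have h1 : ((k:ℤ)+1-s).toNat = n * q.toNat := by
        rw [hq, show (n:ℤ)*q = ((n * q.toNat : ℕ) : ℤ) by push_cast [Int.toNat_of_nonneg hq0]; ring]
        exact Int.toNat_natCast _
      have hkq : n * q.toNat + s - 1 = k := by
        have hc : ((n * q.toNat + s - 1 : ℕ) : ℤ) = (k:ℤ) := by
          rw [Nat.cast_sub (by omega)]
          push_cast [Int.toNat_of_nonneg hq0]
          linarith [hq]
        exact_mod_cast hc
      rw [h1, Nat.mul_div_cancel_left _ (by omega)]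
      have hle := Nat.le_mul_of_pos_left q.toNat (show 0 < n by omega)
      exact ⟨⟨by omega, by omega⟩, hkq⟩
    have hcast : ∀ t : ℕ, ((n*t+s-1:ℕ):ℤ) + 1 - s = (n:ℤ)*t := by
      intro t
      rw [Nat.cast_sub (by omega : 1 ≤ n*t+s)]
      push_cast
      ring
    refine Finset.sum_nbij' (i := fun t => n * t + s - 1)
      (j := fun k => ((k:ℤ) + 1 - s).toNat / n) ?_ ?_ ?_ ?_ ?_
    · intro t ht
      simp only [Finset.mem_filter, Finset.mem_range] at ht ⊢
      exact ⟨by omega, ⟨t, (hcast t).symm ▸ rfl⟩⟩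
    · intro k hk
      exact (hinv k hk).1
    · intro t ht
      simp only [Finset.mem_filter, Finset.mem_range] at ht
      show ((((n*t+s-1 : ℕ)) : ℤ) + 1 - s).toNat / n = t
      rw [hcast t, show (n:ℤ)*t = ((n*t : ℕ) : ℤ) by push_cast; ring, Int.toNat_natCast,
        Nat.mul_div_cancel_left _ (by omega)]
    · intro k hk
      exact (hinv k hk).2
    · intro t ht
      simp only [Finset.mem_filter, Finset.mem_range] at ht
      show (n:ℂ) * ((-1 : ℂ) ^ t * (Nat.choose m (n * t + s - 1) : ℂ))
        = (Nat.choose m (n*t+s-1) : ℂ) *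
            (if (n:ℤ) ∣ (((n*t+s-1:ℕ):ℤ) + 1 - s) then (n:ℂ) * (-1:ℂ)^((((n*t+s-1:ℕ):ℤ) + 1 - s) / n) else 0)
      rw [hcast t, if_pos ⟨t, rfl⟩, Int.mul_ediv_cancel_left _ hnZ, zpow_natCast]
      ring
  rw [stepB, one_div, inv_mul_cancel_left₀ hn0]
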